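/- If the sequent Γ ⊢ A is derivable in the system S, the sequence Γ is proper, and the formula A is constant, then Γ is a constant sequence. -/
import Mathlib


/-- Formulae of the system `S`: built from propositional letters and the constant `I`
(`unit`) with the binary connectives `⊗` (`tens`) and `→` (`imp`). -/
inductive Fml : Type
  | atom : ℕ → Fml
  | unit : Fml
  | tens : Fml → Fml → Fml
  | imp : Fml → Fml → Fml

/-- Derivability in the system `S`.  Sequents are `Γ ⊢ A` with `Γ` a finite list of
formulae.  Axioms: `A ⊢ A` and `⊢ I`; structural rules: weakening, interchange and cut;
operational rules: `⊗⊢`, `⊢⊗`, `→⊢` and `⊢→`. -/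
inductive SDeriv : List Fml → Fml → Prop
  | ax (A : Fml) : SDeriv [A] A
  | axI : SDeriv [] Fml.unit
  | weak {Γ A} : SDeriv Γ A → SDeriv (Fml.unit :: Γ) A
  | exch {Γ Δ : List Fml} {A B C} :
      SDeriv (Γ ++ A :: B :: Δ) C → SDeriv (Γ ++ B :: A :: Δ) C
  | cut {Γ Δ Θ : List Fml} {A B} :
      SDeriv Γ A → SDeriv (Δ ++ A :: Θ) B → SDeriv (Δ ++ Γ ++ Θ) B
  | tensL {Γ Δ : List Fml} {A B C} :
      SDeriv (Γ ++ A :: B :: Δ) C → SDeriv (Γ ++ (A.tens B) :: Δ) C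
  | tensR {Γ Δ : List Fml} {A B} :
      SDeriv Γ A → SDeriv Δ B → SDeriv (Γ ++ Δ) (A.tens B)
  | impL {Γ Δ : List Fml} {A B C} :
      SDeriv Γ A → SDeriv (B :: Δ) C → SDeriv (Γ ++ (A.imp B) :: Δ) C
  | impR {Γ : List Fml} {A B} :
      SDeriv (A :: Γ) B → SDeriv Γ (A.imp B)

/-- A formula is constant when it contains no propositional letters. -/
def Fml.isConst : Fml → Prop
  | .atom _ => False
  | .unit => True
  | .tens A B => A.isConst ∧ B.isConst
  | .imp A B => A.isConst ∧ B.isConst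

/-- A formula is proper when it contains no subformula `B → C` with `C` constant
and `B` not constant. -/
def Fml.proper : Fml → Prop
  | .atom _ => True
  | .unit => True
  | .tens A B => A.proper ∧ B.proper
  | .imp A B => A.proper ∧ B.proper ∧ (B.isConst → A.isConst)

/-! ### A three-element commutative quantale model -/

inductive V : Type
  | bot | mid | top
deriving DecidableEq

instance : Fintype V :=
  ⟨⟨{.bot, .mid, .top}, by decide⟩, fun x => by cases x <;> decide⟩

def V.add : V → V → V
  | .bot, _ => .bot
  | _, .bot => .bot
  | .top, _ => .top
  | _, .top => .top
  | .mid, .mid => .mid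

def V.le : V → V → Bool
  | .bot, _ => true
  | .mid, .bot => false
  | .mid, _ => true
  | .top, .top => true
  | .top, _ => false

def V.himp : V → V → V
  | .bot, _ => .top
  | .mid, b => b
  | .top, .top => .top
  | .top, _ => .bot

lemma V.add_assoc' : ∀ a b c : V, (a.add b).add c = a.add (b.add c) := by decide

lemma V.add_mid : ∀ a : V, a.add .mid = a := by decide

lemma V.mid_add : ∀ a : V, V.mid.add a = a := by decide

lemma V.le_refl : ∀ a : V, a.le a = true := by decide

lemma V.add_le_add : ∀ a b c d : V,
    a.le b = true → c.le d = true → (a.add c).le (b.add d) = true := by decide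

lemma V.exch_lem : ∀ g a b d c : V,
    (g.add (a.add (b.add d))).le c = true → (g.add (b.add (a.add d))).le c = true := by decide

lemma V.cut_lem : ∀ d g a t b : V,
    g.le a = true → (d.add (a.add t)).le b = true → (d.add (g.add t)).le b = true := by decide

lemma V.impL_lem : ∀ g a b d c : V,
    g.le a = true → (b.add d).le c = true →
      (g.add ((a.himp b).add d)).le c = true := by decide

lemma V.impR_lem : ∀ a g b : V,
    (a.add g).le b = true → g.le (a.himp b) = true := by decide

lemma V.add_ne_bot : ∀ a b : V, a ≠ .bot → b ≠ .bot → a.add b ≠ .bot := by decide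

lemma V.top_not_le_mid : ∀ r : V, r ≠ .bot → (V.top.add r).le .mid = false := by decide

/-- Interpretation of formulae: every atom is sent to `top`. -/
def evalF : Fml → V
  | .atom _ => .top
  | .unit => .mid
  | .tens A B => (evalF A).add (evalF B)
  | .imp A B => (evalF A).himp (evalF B)

/-- Interpretation of a list of formulae. -/
def evalL : List Fml → V
  | [] => .mid
  | X :: Γ => (evalF X).add (evalL Γ)

lemma evalL_append : ∀ Γ Δ : List Fml, evalL (Γ ++ Δ) = (evalL Γ).add (evalL Δ) := by
  intro Γ Δ
  induction Γ with
  | nil => simp [evalL, V.mid_add]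
  | cons X Γ ih => simp [evalL, ih, V.add_assoc']

/-- Soundness of the interpretation. -/
lemma sound {Γ : List Fml} {A : Fml} (h : SDeriv Γ A) : (evalL Γ).le (evalF A) = true := by
  induction h with
  | ax A => simpa [evalL, V.add_mid] using V.le_refl (evalF A)
  | axI => decide
  | weak h ih => simpa [evalL, evalF, V.mid_add] using ih
  | exch h ih =>
      simp only [evalL_append, evalL] at ih ⊢
      exact V.exch_lem _ _ _ _ _ ih
  | cut h1 h2 ih1 ih2 =>
      simp only [evalL_append, evalL, V.add_assoc'] at ih2 ⊢
      exact V.cut_lem _ _ _ _ _ ih1 ih2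
  | tensL h ih =>
      simp only [evalL_append, evalL, evalF] at ih ⊢
      simp only [V.add_assoc'] at ih ⊢
      exact ih
  | tensR h1 h2 ih1 ih2 =>
      simp only [evalL_append, evalF]
      exact V.add_le_add _ _ _ _ ih1 ih2
  | impL h1 h2 ih1 ih2 =>
      simp only [evalL_append, evalL, evalF] at ih2 ⊢
      exact V.impL_lem _ _ _ _ _ ih1 ih2
  | impR h ih =>
      simp only [evalL, evalF] at ih ⊢
      exact V.impR_lem _ _ _ ih

/-- Constant formulae evaluate to `mid`. -/
lemma const_eval : ∀ F : Fml, F.isConst → evalF F = .mid := by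
  intro F
  induction F with
  | atom n => intro h; exact absurd h (by simp [Fml.isConst])
  | unit => intro _; rfl
  | tens A B ihA ihB =>
      intro h
      obtain ⟨hA, hB⟩ := h
      simp [evalF, ihA hA, ihB hB]; rfl
  | imp A B ihA ihB =>
      intro h
      obtain ⟨hA, hB⟩ := h
      simp [evalF, ihA hA, ihB hB]; rfl

/-- A proper formula is either constant (evaluating to `mid`) or evaluates to `top`. -/
lemma proper_eval : ∀ F : Fml, F.proper → (F.isConst ∧ evalF F = .mid) ∨ evalF F = .top := by
  intro F
  induction F with
  | atom n => intro _; right; rfl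
  | unit => intro _; left; exact ⟨trivial, rfl⟩
  | tens A B ihA ihB =>
      rintro ⟨pA, pB⟩
      rcases ihA pA with ⟨cA, eA⟩ | eA
      · rcases ihB pB with ⟨cB, eB⟩ | eB
        · left; exact ⟨⟨cA, cB⟩, by simp [evalF, eA, eB]; rfl⟩
        · right; simp [evalF, eA, eB]; rfl
      · rcases ihB pB with ⟨cB, eB⟩ | eB
        · right; simp [evalF, eA, eB]; rfl
        · right; simp [evalF, eA, eB]; rfl
  | imp A B ihA ihB =>
      rintro ⟨pA, pB, hcl⟩
      rcases ihB pB with ⟨cB, eB⟩ | eB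
      · have cA := hcl cB
        left
        exact ⟨⟨cA, cB⟩, by simp [evalF, const_eval A cA, eB]; rfl⟩
      · rcases ihA pA with ⟨cA, eA⟩ | eA
        · right; simp [evalF, eA, eB]; rfl
        · right; simp [evalF, eA, eB]; rfl

lemma evalL_ne_bot : ∀ Γ : List Fml, (∀ X ∈ Γ, X.proper) → evalL Γ ≠ .bot := by
  intro Γ
  induction Γ with
  | nil => intro _; simp [evalL]
  | cons X Γ ih =>
      intro hp
      have hX : evalF X ≠ .bot := by
        rcases proper_eval X (hp X (by simp)) with ⟨_, e⟩ | e <;> simp [e]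
      exact V.add_ne_bot _ _ hX (ih fun Y hY => hp Y (by simp [hY]))

lemma finish : ∀ Γ : List Fml, (∀ X ∈ Γ, X.proper) → (evalL Γ).le .mid = true →
    ∀ X ∈ Γ, X.isConst := by
  intro Γ
  induction Γ with
  | nil => intro _ _ X hX; exact absurd hX (by simp)
  | cons Y Γ ih =>
      intro hp hle X hX
      have hpΓ : ∀ X ∈ Γ, X.proper := fun Z hZ => hp Z (by simp [hZ])
      rcases proper_eval Y (hp Y (by simp)) with ⟨cY, eY⟩ | eY
      · have hle' : (evalL Γ).le .mid = true := by
          simpa [evalL, eY, V.mid_add] using hle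
        rcases List.mem_cons.1 hX with rfl | hX
        · exact cY
        · exact ih hpΓ hle' X hX
      · exfalso
        have hne := evalL_ne_bot Γ hpΓ
        have := V.top_not_le_mid (evalL Γ) hne
        rw [evalL, eY] at hle
        rw [this] at hle
        exact Bool.false_ne_true hle

/-- If `Γ ⊢ A` is derivable in `S`, `Γ` is proper and `A` is constant, then `Γ` is a
constant sequence. -/
theorem proper_antecedent_constant {Γ : List Fml} {A : Fml} (h : SDeriv Γ A)
    (hΓ : ∀ X ∈ Γ, X.proper) (hA : A.isConst) : ∀ X ∈ Γ, X.isConst := by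
  have hs := sound h
  rw [const_eval A hA] at hs
  exact finish Γ hΓ hs
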